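/- Let d ≥ 1, let S ⊂ ℝ^d be a finite set whose convex hull P = conv(S) has nonempty interior, and let V be the (finite) set of extreme points of P. For each p ∈ V let E(P,p) be the external angle set of P at p. Then the sum over p ∈ V of σ(E(P,p)) equals σ(S^{d-1}), the total (d−1)-dimensional Hausdorff measure of the unit sphere. (In other words, the external angles at the vertices of a convex polytope sum to the full solid angle.) -/

import Mathlib

open MeasureTheory RealInnerProductSpace

/-- The external angle set of a convex set `C` at a point `p`: the set of unit vectors `u`
with `⟪u, x − p⟫ ≤ 0` for every `x ∈ C`. -/
def externalAngleSet {d : ℕ} (C : Set (EuclideanSpace ℝ (Fin d)))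
    (p : EuclideanSpace ℝ (Fin d)) : Set (EuclideanSpace ℝ (Fin d)) :=
  {u | ‖u‖ = 1 ∧ ∀ x ∈ C, ⟪u, x - p⟫ ≤ 0}

/-- The unit sphere of a Euclidean space is null for the Hausdorff measure in the
dimension of the space. -/
lemma sphere_hm_null (n : ℕ) :
    μH[(n : ℝ)] (Metric.sphere (0 : EuclideanSpace ℝ (Fin n)) 1) = 0 := by
  rcases Nat.eq_zero_or_pos n with rfl | hn
  · have : (Metric.sphere (0 : EuclideanSpace ℝ (Fin 0)) 1) = ∅ := by
      ext x
      simp [Subsingleton.elim x 0]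
    simp [this]
  · haveI : Nontrivial (EuclideanSpace ℝ (Fin n)) := by
      have : 0 < Module.finrank ℝ (EuclideanSpace ℝ (Fin n)) := by simpa using hn
      exact Module.nontrivial_of_finrank_pos this
    set e := PiLp.continuousLinearEquiv 2 ℝ (fun _ : Fin n => ℝ) with he
    have hanti : AntilipschitzWith ‖(e.symm : (Fin n → ℝ) →L[ℝ] EuclideanSpace ℝ (Fin n))‖₊ e :=
      e.antilipschitz
    have hle := hanti.le_hausdorffMeasure_image (by positivity : (0:ℝ) ≤ (n:ℝ))
      (Metric.sphere (0 : EuclideanSpace ℝ (Fin n)) 1)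
    have himg : (⇑e '' Metric.sphere (0 : EuclideanSpace ℝ (Fin n)) 1)
        = (MeasurableEquiv.toLp 2 (Fin n → ℝ)).symm '' (Metric.sphere 0 1) := rfl
    have hpi : (μH[(n:ℝ)] : Measure (Fin n → ℝ)) = volume := by
      have := MeasureTheory.hausdorffMeasure_pi_real (ι := Fin n)
      simpa using this
    have hvol : volume ((MeasurableEquiv.toLp 2 (Fin n → ℝ)).symm ''
        (Metric.sphere (0 : EuclideanSpace ℝ (Fin n)) 1)) = 0 := by
      rw [MeasurableEquiv.image_eq_preimage_symm]
      rw [(MeasurePreserving.symm _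
        (EuclideanSpace.volume_preserving_symm_measurableEquiv_toLp (Fin n))).measure_preimage
        (Metric.isClosed_sphere.measurableSet.nullMeasurableSet)]
      exact Measure.addHaar_sphere _ _ _
    rw [himg, hpi, hvol, mul_zero] at hle
    exact le_antisymm hle zero_le

/-- The intersection of the unit sphere with a hyperplane through the origin is null for
the `(d-1)`-dimensional Hausdorff measure. -/
lemma sphere_hyperplane_null (d : ℕ) (hd : 1 ≤ d) (v : EuclideanSpace ℝ (Fin d)) (hv : v ≠ 0) :
    μH[(d : ℝ) - 1] {u : EuclideanSpace ℝ (Fin d) | ‖u‖ = 1 ∧ ⟪u, v⟫ = 0} = 0 := by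
  set W := (ℝ ∙ v)ᗮ with hW
  haveI : Fact (Module.finrank ℝ (EuclideanSpace ℝ (Fin d)) = (d - 1) + 1) :=
    ⟨by simp [Nat.sub_add_cancel hd]⟩
  have hfr : Module.finrank ℝ W = d - 1 := Submodule.finrank_orthogonal_span_singleton hv
  set n := d - 1 with hn
  have hcast : ((n : ℝ)) = (d : ℝ) - 1 := by
    have h1 : n + 1 = d := Nat.sub_add_cancel hd
    have : (n : ℝ) + 1 = (d : ℝ) := by exact_mod_cast congrArg (Nat.cast : ℕ → ℝ) h1
    linarith
  let B : EuclideanSpace ℝ (Fin n) ≃ₗᵢ[ℝ] W :=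
    ((stdOrthonormalBasis ℝ W).reindex (finCongr hfr)).repr.symm
  let ι : EuclideanSpace ℝ (Fin n) →ₗᵢ[ℝ] EuclideanSpace ℝ (Fin d) :=
    W.subtypeₗᵢ.comp B.toLinearIsometry
  have hsub : {u : EuclideanSpace ℝ (Fin d) | ‖u‖ = 1 ∧ ⟪u, v⟫ = 0}
      ⊆ ⇑ι '' (Metric.sphere 0 1) := by
    rintro u ⟨hu1, hu2⟩
    have huW : u ∈ W := by
      rw [hW, Submodule.mem_orthogonal_singleton_iff_inner_right, real_inner_comm]
      exact hu2
    refine ⟨B.symm ⟨u, huW⟩, ?_, ?_⟩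
    · rw [mem_sphere_zero_iff_norm, B.symm.norm_map]
      simpa using hu1
    · simp [ι, B]
  have himg : μH[(d:ℝ)-1] (⇑ι '' (Metric.sphere (0 : EuclideanSpace ℝ (Fin n)) 1))
      = μH[(d:ℝ)-1] (Metric.sphere (0 : EuclideanSpace ℝ (Fin n)) 1) :=
    ι.isometry.hausdorffMeasure_image (Or.inl (by simp; exact_mod_cast hd)) _
  have h0 : μH[(d:ℝ)-1] (Metric.sphere (0 : EuclideanSpace ℝ (Fin n)) 1) = 0 := by
    rw [← hcast]; exact sphere_hm_null n
  exact le_antisymm (le_trans (measure_mono hsub) (by rw [himg, h0])) zero_le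

lemma externalAngleSet_isClosed {d : ℕ} (C : Set (EuclideanSpace ℝ (Fin d)))
    (p : EuclideanSpace ℝ (Fin d)) : IsClosed (externalAngleSet C p) := by
  have : externalAngleSet C p
      = {u : EuclideanSpace ℝ (Fin d) | ‖u‖ = 1}
        ∩ ⋂ x ∈ C, {u : EuclideanSpace ℝ (Fin d) | ⟪u, x - p⟫ ≤ 0} := by
    ext u; simp [externalAngleSet]
  rw [this]
  exact (isClosed_eq continuous_norm continuous_const).inter
    (isClosed_biInter fun x _ =>
      isClosed_le (Continuous.inner continuous_id continuous_const) continuous_const)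

/-- The unit sphere is covered by the external angle sets at the extreme points. -/
lemma sphere_subset_biUnion_externalAngleSet (d : ℕ) (S : Set (EuclideanSpace ℝ (Fin d)))
    (hS : S.Finite) (hPne : (convexHull ℝ S).Nonempty) :
    Metric.sphere (0 : EuclideanSpace ℝ (Fin d)) 1 ⊆
      ⋃ p ∈ (convexHull ℝ S).extremePoints ℝ, externalAngleSet (convexHull ℝ S) p := by
  set P := convexHull ℝ S with hP
  have hPc : IsCompact P := hS.isCompact_convexHull ℝ
  intro u hu
  rw [mem_sphere_zero_iff_norm] at hu
  set t : Set (EuclideanSpace ℝ (Fin d)) :=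
    {x ∈ P | ∀ y ∈ P, (innerSL ℝ u) y ≤ (innerSL ℝ u) x} with ht
  have hexp : IsExposed ℝ P t := fun _ => ⟨innerSL ℝ u, rfl⟩
  have htc : IsCompact t := hexp.isCompact hPc
  have htne : t.Nonempty := by
    obtain ⟨x, hxP, hx⟩ := hPc.exists_isMaxOn hPne (innerSL ℝ u).continuous.continuousOn
    exact ⟨x, hxP, fun y hy => hx hy⟩
  obtain ⟨p, hp⟩ := htc.extremePoints_nonempty htne
  have hpV : p ∈ P.extremePoints ℝ := hexp.isExtreme.extremePoints_subset_extremePoints hp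
  refine Set.mem_biUnion hpV ⟨hu, fun x hx => ?_⟩
  have := hp.1.2 x hx
  simp only [innerSL_apply_apply] at this
  rw [inner_sub_right]
  linarith [this]

theorem sum_external_angles (d : ℕ) (hd : 1 ≤ d) (S : Set (EuclideanSpace ℝ (Fin d)))
    (hS : S.Finite) (hint : (interior (convexHull ℝ S)).Nonempty) :
    ∑' p : (convexHull ℝ S).extremePoints ℝ,
        μH[(d : ℝ) - 1] (externalAngleSet (convexHull ℝ S) (p : EuclideanSpace ℝ (Fin d)))
      = μH[(d : ℝ) - 1] (Metric.sphere (0 : EuclideanSpace ℝ (Fin d)) 1) := by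
  set P := convexHull ℝ S with hPdef
  set V := P.extremePoints ℝ with hVdef
  have hV : V.Finite := hS.subset (extremePoints_convexHull_subset)
  have hPne : P.Nonempty := hint.mono interior_subset
  set μ := (μH[(d : ℝ) - 1] : Measure (EuclideanSpace ℝ (Fin d))) with hμ
  set f : EuclideanSpace ℝ (Fin d) → Set (EuclideanSpace ℝ (Fin d)) :=
    fun p => externalAngleSet P p with hf
  -- tsum to finset sum
  have h1 : ∑' p : V, μ (f (p : EuclideanSpace ℝ (Fin d)))
      = ∑ p ∈ hV.toFinset, μ (f p) := by
    exact (tsum_congr_set_coe (fun p => μ (f p)) hV.coe_toFinset.symm).trans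
      (Finset.tsum_subtype _ (fun p => μ (f p)))
  -- pairwise a.e. disjoint
  have hpair : Set.Pairwise ↑hV.toFinset (Function.onFun (AEDisjoint μ) f) := by
    intro p hp q hq hpq
    simp only [Finset.mem_coe, Set.Finite.mem_toFinset] at hp hq
    have hsub : f p ∩ f q ⊆ {u : EuclideanSpace ℝ (Fin d) | ‖u‖ = 1 ∧ ⟪u, p - q⟫ = 0} := by
      rintro u ⟨⟨hu1, hu2⟩, ⟨_, hu3⟩⟩
      refine ⟨hu1, le_antisymm (hu3 p (extremePoints_subset hp)) ?_⟩
      have h := hu2 q (extremePoints_subset hq)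
      rw [inner_sub_right] at h ⊢
      linarith
    exact measure_mono_null hsub (sphere_hyperplane_null d hd (p - q) (sub_ne_zero.2 hpq))
  have hmeas : ∀ p ∈ hV.toFinset, NullMeasurableSet (f p) μ := fun p _ =>
    (externalAngleSet_isClosed P p).measurableSet.nullMeasurableSet
  have h2 : μ (⋃ p ∈ hV.toFinset, f p) = ∑ p ∈ hV.toFinset, μ (f p) :=
    measure_biUnion_finset₀ hpair hmeas
  have h3 : (⋃ p ∈ hV.toFinset, f p) = Metric.sphere (0 : EuclideanSpace ℝ (Fin d)) 1 := by
    apply Set.Subset.antisymm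
    · exact Set.iUnion₂_subset fun p _ u hu => mem_sphere_zero_iff_norm.mpr hu.1
    · intro u hu
      have := sphere_subset_biUnion_externalAngleSet d S hS hPne hu
      simpa [Set.Finite.mem_toFinset] using this
  rw [h1, ← h2, h3]
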